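/- Let G be a graph and let G' be the graph obtained from G by subdividing some edge of G twice (replacing an edge uv by a path u–a–b–v with two new vertices a, b). Then the vertex cover numbers satisfy τ(G) = τ(G') − 1. -/
import Mathlib


/-- The minimum size of a vertex cover of a finite graph. -/
noncomputable def vertexCoverNumber {V : Type} [Fintype V] (G : SimpleGraph V) : ℕ :=
  sInf {n : ℕ | ∃ C : Finset V,
    (∀ ⦃a b : V⦄, G.Adj a b → a ∈ C ∨ b ∈ C) ∧ C.card = n}

/-- The graph obtained from `G` by subdividing the edge `uv` twice: the edge `uv`
is removed and replaced by the path `u – a – b – v` through two new vertices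
`a = Sum.inr 0` and `b = Sum.inr 1`. -/
def doubleSubdivision {V : Type} [DecidableEq V] (G : SimpleGraph V) (u v : V) :
    SimpleGraph (V ⊕ Fin 2) :=
  SimpleGraph.fromRel (fun a b =>
    match a, b with
    | Sum.inl x, Sum.inl y => G.Adj x y ∧ ¬((x = u ∧ y = v) ∨ (x = v ∧ y = u))
    | Sum.inl x, Sum.inr j => (x = u ∧ j = 0) ∨ (x = v ∧ j = 1)
    | Sum.inr j, Sum.inr j' => j ≠ j'
    | _, _ => False)

section Aux
variable {V : Type} [DecidableEq V] (G : SimpleGraph V) (u v : V)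

lemma adj_ll (x y : V) :
    (doubleSubdivision G u v).Adj (Sum.inl x) (Sum.inl y) ↔
      G.Adj x y ∧ ¬((x = u ∧ y = v) ∨ (x = v ∧ y = u)) := by
  simp only [doubleSubdivision, SimpleGraph.fromRel_adj, Sum.inl.injEq, ne_eq]
  constructor
  · rintro ⟨hne, h | h⟩
    · exact h
    · exact ⟨h.1.symm, fun hc => h.2 (by tauto)⟩
  · intro h
    exact ⟨G.ne_of_adj h.1, Or.inl h⟩

lemma adj_lr (x : V) (j : Fin 2) :
    (doubleSubdivision G u v).Adj (Sum.inl x) (Sum.inr j) ↔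
      (x = u ∧ j = 0) ∨ (x = v ∧ j = 1) := by
  simp only [doubleSubdivision, SimpleGraph.fromRel_adj]
  simp

lemma adj_rr (j j' : Fin 2) :
    (doubleSubdivision G u v).Adj (Sum.inr j) (Sum.inr j') ↔ j ≠ j' := by
  simp only [doubleSubdivision, SimpleGraph.fromRel_adj]
  simp
  tauto

end Aux

lemma vcn_exists {V : Type} [Fintype V] (G : SimpleGraph V) :
    ∃ C : Finset V, (∀ ⦃a b : V⦄, G.Adj a b → a ∈ C ∨ b ∈ C) ∧
      C.card = vertexCoverNumber G := by
  have hne : {n : ℕ | ∃ C : Finset V,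
      (∀ ⦃a b : V⦄, G.Adj a b → a ∈ C ∨ b ∈ C) ∧ C.card = n}.Nonempty :=
    ⟨Finset.univ.card, Finset.univ, fun a b _ => Or.inl (Finset.mem_univ a), rfl⟩
  exact Nat.sInf_mem hne

lemma vcn_le {V : Type} [Fintype V] (G : SimpleGraph V) (C : Finset V)
    (h : ∀ ⦃a b : V⦄, G.Adj a b → a ∈ C ∨ b ∈ C) :
    vertexCoverNumber G ≤ C.card :=
  Nat.sInf_le ⟨C, h, rfl⟩

/-- subdividing an edge of `G` twice increases the vertex cover
number by exactly one: `τ(G) = τ(G') − 1`. -/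
theorem vertexCoverNumber_doubleSubdivision
    {V : Type} [Fintype V] [DecidableEq V] (G : SimpleGraph V) (u v : V)
    (huv : G.Adj u v) :
    vertexCoverNumber G = vertexCoverNumber (doubleSubdivision G u v) - 1 := by
  set D := doubleSubdivision G u v with hD
  set n := vertexCoverNumber G
  set m := vertexCoverNumber D
  -- Upper: m ≤ n + 1
  have hup : m ≤ n + 1 := by
    obtain ⟨C, hC, hCcard⟩ := vcn_exists G
    have key : ∀ j : Fin 2, ((j = 1 → u ∈ C) ∧ (j = 0 → v ∈ C)) →
        m ≤ n + 1 := by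
      intro j hj
      have hnotmem : (Sum.inr j : V ⊕ Fin 2) ∉ C.image (Sum.inl : V → V ⊕ Fin 2) := by
        simp
      have hcard : (insert (Sum.inr j : V ⊕ Fin 2) (C.image (Sum.inl : V → V ⊕ Fin 2))).card = n + 1 := by
        rw [Finset.card_insert_of_notMem hnotmem,
          Finset.card_image_of_injective _ Sum.inl_injective, hCcard]
      refine le_of_le_of_eq (vcn_le D (insert (Sum.inr j : V ⊕ Fin 2) (C.image (Sum.inl : V → V ⊕ Fin 2))) ?_) hcard
      rintro (x | i) (y | i') hadj
      · rw [hD, adj_ll] at hadj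
        rcases hC hadj.1 with h | h
        · exact Or.inl (by simp [h])
        · exact Or.inr (by simp [h])
      · rw [hD, adj_lr] at hadj
        rcases hadj with ⟨hx, hi⟩ | ⟨hx, hi⟩
        · subst hx; subst hi
          rcases Fin.exists_fin_two.mp ⟨j, rfl⟩ with _ | _
          all_goals {
            by_cases hj0 : j = 0
            · exact Or.inr (by simp [hj0])
            · have hj1 : j = 1 := by omega
              exact Or.inl (by simp [hj.1 hj1]) }
        · subst hx; subst hi
          by_cases hj1 : j = 1
          · exact Or.inr (by simp [hj1])
          · have hj0 : j = 0 := by omega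
            exact Or.inl (by simp [hj.2 hj0])
      · rw [hD] at hadj
        have := (adj_lr G u v y i).mp hadj.symm
        rcases this with ⟨hx, hi⟩ | ⟨hx, hi⟩
        · subst hx; subst hi
          by_cases hj0 : j = 0
          · exact Or.inl (by simp [hj0])
          · have hj1 : j = 1 := by omega
            exact Or.inr (by simp [hj.1 hj1])
        · subst hx; subst hi
          by_cases hj1 : j = 1
          · exact Or.inl (by simp [hj1])
          · have hj0 : j = 0 := by omega
            exact Or.inr (by simp [hj.2 hj0])
      · rw [hD, adj_rr] at hadj
        have : j = i ∨ j = i' := by omega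
        rcases this with h | h
        · exact Or.inl (by simp [h])
        · exact Or.inr (by simp [h])
    rcases hC huv with h | h
    · exact key 1 ⟨fun _ => h, fun h10 => absurd h10 (by simp)⟩
    · exact key 0 ⟨fun h01 => absurd h01 (by simp), fun _ => h⟩
  -- Lower: n + 1 ≤ m
  have hlow : n + 1 ≤ m := by
    obtain ⟨C', hC', hC'card⟩ := vcn_exists D
    set C0 : Finset V := C'.preimage Sum.inl (Sum.inl_injective.injOn) with hC0
    have hmemC0 : ∀ x : V, x ∈ C0 ↔ Sum.inl x ∈ C' := by
      intro x; simp [hC0, Finset.mem_preimage]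
    have hcov_ne : ∀ ⦃x y : V⦄, G.Adj x y →
        ¬((x = u ∧ y = v) ∨ (x = v ∧ y = u)) → x ∈ C0 ∨ y ∈ C0 := by
      intro x y hxy hne
      have : (doubleSubdivision G u v).Adj (Sum.inl x) (Sum.inl y) :=
        (adj_ll G u v x y).mpr ⟨hxy, hne⟩
      rcases hC' this with h | h
      · exact Or.inl ((hmemC0 x).mpr h)
      · exact Or.inr ((hmemC0 y).mpr h)
    have hab : (Sum.inr 0 : V ⊕ Fin 2) ∈ C' ∨ (Sum.inr 1 : V ⊕ Fin 2) ∈ C' := by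
      have : D.Adj (Sum.inr 0) (Sum.inr 1) := (adj_rr G u v 0 1).mpr (by simp)
      exact hC' this
    have himg : (C0.image (Sum.inl : V → V ⊕ Fin 2)) ⊆ C' := by
      intro a ha
      obtain ⟨x, hx, rfl⟩ := Finset.mem_image.mp ha
      exact (hmemC0 x).mp hx
    have himgcard : (C0.image (Sum.inl : V → V ⊕ Fin 2)).card = C0.card :=
      Finset.card_image_of_injective _ Sum.inl_injective
    by_cases h0 : (Sum.inr 0 : V ⊕ Fin 2) ∈ C'
    · by_cases h1 : (Sum.inr 1 : V ⊕ Fin 2) ∈ C'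
      · -- both: use insert u C0
        have hsub : insert (Sum.inr 1) (insert (Sum.inr 0) (C0.image (Sum.inl : V → V ⊕ Fin 2))) ⊆ C' := by
          intro a ha
          rcases Finset.mem_insert.mp ha with rfl | ha
          · exact h1
          rcases Finset.mem_insert.mp ha with rfl | ha
          · exact h0
          · exact himg ha
        have hcard2 : C0.card + 2 ≤ m := by
          have := Finset.card_le_card hsub
          rw [Finset.card_insert_of_notMem (by simp),
            Finset.card_insert_of_notMem (by simp), himgcard, hC'card] at this
          omega
        have hcov : ∀ ⦃x y : V⦄, G.Adj x y → x ∈ insert u C0 ∨ y ∈ insert u C0 := by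
          intro x y hxy
          by_cases hne : (x = u ∧ y = v) ∨ (x = v ∧ y = u)
          · rcases hne with ⟨hx, _⟩ | ⟨_, hy⟩
            · exact Or.inl (by rw [hx]; exact Finset.mem_insert_self u _)
            · exact Or.inr (by rw [hy]; exact Finset.mem_insert_self u _)
          · rcases hcov_ne hxy hne with h | h
            · exact Or.inl (Finset.mem_insert_of_mem h)
            · exact Or.inr (Finset.mem_insert_of_mem h)
        have := vcn_le G _ hcov
        have hle : (insert u C0).card ≤ C0.card + 1 := Finset.card_insert_le _ _
        omega
      · -- only inr 0: then v ∈ C0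
        have hv : v ∈ C0 := by
          have hadj : D.Adj (Sum.inl v) (Sum.inr 1) :=
            (adj_lr G u v v 1).mpr (Or.inr ⟨rfl, rfl⟩)
          rcases hC' hadj with h | h
          · exact (hmemC0 v).mpr h
          · exact absurd h h1
        have hsub : insert (Sum.inr 0) (C0.image (Sum.inl : V → V ⊕ Fin 2)) ⊆ C' := by
          intro a ha
          rcases Finset.mem_insert.mp ha with rfl | ha
          · exact h0
          · exact himg ha
        have hcard1 : C0.card + 1 ≤ m := by
          have := Finset.card_le_card hsub
          rw [Finset.card_insert_of_notMem (by simp), himgcard, hC'card] at this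
          omega
        have hcov : ∀ ⦃x y : V⦄, G.Adj x y → x ∈ C0 ∨ y ∈ C0 := by
          intro x y hxy
          by_cases hne : (x = u ∧ y = v) ∨ (x = v ∧ y = u)
          · rcases hne with ⟨_, hy⟩ | ⟨hx, _⟩
            · exact Or.inr (by rw [hy]; exact hv)
            · exact Or.inl (by rw [hx]; exact hv)
          · exact hcov_ne hxy hne
        have := vcn_le G _ hcov
        omega
    · -- inr 0 ∉ C', so inr 1 ∈ C' and u ∈ C0
      have h1 : (Sum.inr 1 : V ⊕ Fin 2) ∈ C' := hab.resolve_left h0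
      have hu : u ∈ C0 := by
        have hadj : D.Adj (Sum.inl u) (Sum.inr 0) :=
          (adj_lr G u v u 0).mpr (Or.inl ⟨rfl, rfl⟩)
        rcases hC' hadj with h | h
        · exact (hmemC0 u).mpr h
        · exact absurd h h0
      have hsub : insert (Sum.inr 1) (C0.image (Sum.inl : V → V ⊕ Fin 2)) ⊆ C' := by
        intro a ha
        rcases Finset.mem_insert.mp ha with rfl | ha
        · exact h1
        · exact himg ha
      have hcard1 : C0.card + 1 ≤ m := by
        have := Finset.card_le_card hsub
        rw [Finset.card_insert_of_notMem (by simp), himgcard, hC'card] at this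
        omega
      have hcov : ∀ ⦃x y : V⦄, G.Adj x y → x ∈ C0 ∨ y ∈ C0 := by
        intro x y hxy
        by_cases hne : (x = u ∧ y = v) ∨ (x = v ∧ y = u)
        · rcases hne with ⟨hx, _⟩ | ⟨_, hy⟩
          · exact Or.inl (by rw [hx]; exact hu)
          · exact Or.inr (by rw [hy]; exact hu)
        · exact hcov_ne hxy hne
      have := vcn_le G _ hcov
      omega
  omega
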